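/- Let T = (V, E; f, g) be a weighted tree with n > 1 vertices, let u be a pendant (degree-one) vertex of T with pendant edge e = (u, v), and let T' = (V∖{u}, E∖{e}; f', g') be the weighted tree with f'(v) = f(v)(f(u)g(e) + 1), f'(w) = f(w) for all w ≠ v, and g' the restriction of g. Then for every two distinct vertices w₁, w₂ of T with w₁ ≠ u and w₂ ≠ u, F(T; f, g; w₁, w₂) = F(T'; f', g'; w₁, w₂). -/

import Mathlib

open SimpleGraph

/-- `S` is the vertex set of a subtree of `G`: a nonempty set of vertices
whose induced subgraph is connected. -/
def SimpleGraph.IsSubtree {V : Type*} (G : SimpleGraph V) (S : Finset V) : Prop :=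
  S.Nonempty ∧ (G.induce (S : Set V)).Connected

/-- `χ(G)`: the number of subtrees of `G`. -/
noncomputable def SimpleGraph.subtreeCount {V : Type*} (G : SimpleGraph V) : ℕ :=
  Nat.card {S : Finset V // G.IsSubtree S}

/-- The weight of a subtree with vertex set `S`: the product of the weights of its
vertices times the product of the weights of the edges of `G` joining two vertices
of `S`. -/
noncomputable def SimpleGraph.subtreeWeight {V R : Type*} [CommRing R]
    (G : SimpleGraph V) (f : V → R) (g : Sym2 V → R) (S : Finset V) : R :=
  (∏ v ∈ S, f v) * ∏ᶠ e ∈ {e : Sym2 V | e ∈ G.edgeSet ∧ ∀ x ∈ e, x ∈ S}, g e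

/-- `F(G; f, g)`: the sum of the weights of all subtrees of `G`. -/
noncomputable def SimpleGraph.subtreeSum {V R : Type*} [CommRing R]
    (G : SimpleGraph V) (f : V → R) (g : Sym2 V → R) : R :=
  ∑ᶠ S ∈ {S : Finset V | G.IsSubtree S}, G.subtreeWeight f g S

/-- `F(G; f, g; w)`: the sum of the weights of all subtrees of `G` containing `w`. -/
noncomputable def SimpleGraph.subtreeSumAt {V R : Type*} [CommRing R]
    (G : SimpleGraph V) (f : V → R) (g : Sym2 V → R) (w : V) : R :=
  ∑ᶠ S ∈ {S : Finset V | G.IsSubtree S ∧ w ∈ S}, G.subtreeWeight f g S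

/-- `F(G; f, g; w₁, w₂)`: the sum of the weights of all subtrees of `G` containing
both `w₁` and `w₂`. -/
noncomputable def SimpleGraph.subtreeSumAt2 {V R : Type*} [CommRing R]
    (G : SimpleGraph V) (f : V → R) (g : Sym2 V → R) (w₁ w₂ : V) : R :=
  ∑ᶠ S ∈ {S : Finset V | G.IsSubtree S ∧ w₁ ∈ S ∧ w₂ ∈ S}, G.subtreeWeight f g S

/-! ### Auxiliary lemmas -/

lemma reachable_induce_of_walk' {V : Type*} {G : SimpleGraph V} {a b : V} {s : Set V}
    (p : G.Walk a b) (hs : ∀ x ∈ p.support, x ∈ s) (ha : a ∈ s) (hb : b ∈ s) :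
    (G.induce s).Reachable ⟨a, ha⟩ ⟨b, hb⟩ := by
  have h := p.connected_induce_support
  have r := h.preconnected ⟨a, p.start_mem_support⟩ ⟨b, p.end_mem_support⟩
  exact r.map (induceHomOfLE G (fun x hx => hs x hx)).toHom

lemma walk_of_reachable_induce {V : Type*} {G : SimpleGraph V} {s : Set V} {a b : s}
    (h : (G.induce s).Reachable a b) :
    ∃ p : G.Walk (a : V) (b : V), ∀ x ∈ p.support, x ∈ s := by
  obtain ⟨q⟩ := h
  refine ⟨q.map (Embedding.induce s).toHom, ?_⟩
  intro x hx
  erw [Walk.support_map, List.mem_map] at hx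
  obtain ⟨y, _, rfl⟩ := hx
  exact y.2

lemma path_avoids {V : Type*} {G : SimpleGraph V} {u v : V}
    (huniq : ∀ x, G.Adj u x → x = v) :
    ∀ {a b : V} (p : G.Walk a b), p.IsPath → a ≠ u → b ≠ u → u ∉ p.support := by
  intro a b p
  induction p with
  | nil => intro _ ha _ h; simp at h; exact ha h.symm
  | @cons a c b h p ih =>
    intro hp ha hb hu
    rcases List.mem_cons.mp (by simpa [Walk.support_cons] using hu) with h1 | h2
    · exact ha h1.symm
    · by_cases hc : c = u
      · subst hc
        have hav : a = v := huniq a h.symm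
        cases p with
        | nil => exact hb rfl
        | @cons _ d _ h' p' =>
          have hdv : d = v := huniq d h'
          have : a ∈ (Walk.cons h' p').support := by
            rw [hav, ← hdv]; simp
          exact (Walk.cons_isPath_iff _ _ |>.mp hp).2 this
      · exact ih (Walk.cons_isPath_iff _ _ |>.mp hp).1 hc hb h2

section
variable {V : Type*} [DecidableEq V] {G : SimpleGraph V} {u v : V}

lemma isSubtree_insert_pendant (hadj : G.Adj u v) {S : Finset V} (hS : G.IsSubtree S)
    (hv : v ∈ S) : G.IsSubtree (insert u S) := by
  refine ⟨⟨u, Finset.mem_insert_self _ _⟩, ?_⟩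
  have h1 : (G.induce ({u, v} : Set V)).Connected := induce_pair_connected_of_adj hadj
  have := connected_induce_union hS.2.preconnected h1.preconnected hv (by simp : u ∈ ({u,v} : Set V)) hadj.symm
  have hset : ((S : Set V) ∪ {u, v}) = ((insert u S : Finset V) : Set V) := by
    rw [Finset.coe_insert]
    ext x
    simp only [Set.mem_union, Set.mem_insert_iff, Set.mem_singleton_iff, Finset.mem_coe]
    constructor
    · rintro (h | h | rfl)
      exacts [Or.inr h, Or.inl h, Or.inr hv]
    · rintro (rfl | h)
      exacts [Or.inr (Or.inl rfl), Or.inl h]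
  rwa [hset] at this

lemma pendant_erase (huniq : ∀ x, G.Adj u x → x = v)
    {S : Finset V} (hS : G.IsSubtree S) (hu : u ∈ S) {w : V} (hw : w ∈ S) (hwu : w ≠ u) :
    v ∈ S ∧ G.IsSubtree (S.erase u) := by
  have hvS : v ∈ S := by
    obtain ⟨p, hp⟩ := walk_of_reachable_induce
      (hS.2.preconnected (⟨u, hu⟩ : (S : Set V)) ⟨w, hw⟩)
    cases p with
    | nil => exact absurd rfl hwu.symm
    | @cons _ d _ h' p' =>
      have hdv : d = v := huniq d h'
      exact hdv ▸ hp d (by simp)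
  refine ⟨hvS, ⟨⟨w, Finset.mem_erase.mpr ⟨hwu, hw⟩⟩, ?_⟩⟩
  rw [connected_iff_exists_forall_reachable]
  refine ⟨⟨w, by simp [Finset.mem_erase, hwu, hw]⟩, ?_⟩
  rintro ⟨b, hb⟩
  have hb' : b ∈ S.erase u := by exact_mod_cast hb
  have hbS : b ∈ S := Finset.mem_of_mem_erase hb'
  have hbu : b ≠ u := Finset.ne_of_mem_erase hb'
  obtain ⟨p, hp⟩ := walk_of_reachable_induce
    (hS.2.preconnected (⟨w, hw⟩ : (S : Set V)) ⟨b, hbS⟩)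
  have hq : ∀ x ∈ p.bypass.support, x ∈ ((S.erase u : Finset V) : Set V) := by
    intro x hx
    have hxS : x ∈ S := hp x (p.support_bypass_subset hx)
    have hxu : x ≠ u := by
      rintro rfl
      exact path_avoids huniq p.bypass p.bypass_isPath hwu hbu hx
    simp [Finset.mem_erase, hxu, hxS]
  exact reachable_induce_of_walk' p.bypass hq _ _
end

noncomputable def doubleInduceIso {V : Type*} [DecidableEq V] (G : SimpleGraph V) (s : Set V)
    (S' : Finset s) :
    ((G.induce s).induce (S' : Set s)) ≃g
      (G.induce ((S'.image Subtype.val : Finset V) : Set V)) where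
  toFun x := ⟨x.1.1, by
    simp only [Finset.coe_image, Set.mem_image, Finset.mem_coe]
    exact ⟨x.1, x.2, rfl⟩⟩
  invFun y := by
    refine ⟨⟨y.1, ?_⟩, ?_⟩
    · have hy := y.2
      simp only [Finset.coe_image, Set.mem_image, Finset.mem_coe] at hy
      obtain ⟨a, _, h⟩ := hy
      exact h ▸ a.2
    · have hy := y.2
      simp only [Finset.coe_image, Set.mem_image, Finset.mem_coe] at hy
      obtain ⟨a, ha, h⟩ := hy
      simp only [Finset.mem_coe]
      convert ha using 1
      exact Subtype.ext h.symm
  left_inv x := by ext; rfl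
  right_inv y := by ext; rfl
  map_rel_iff' := Iff.rfl

lemma isSubtree_image_val {V : Type*} [DecidableEq V] {G : SimpleGraph V} {s : Set V}
    (S' : Finset s) :
    (G.induce s).IsSubtree S' ↔ G.IsSubtree (S'.image Subtype.val) := by
  unfold SimpleGraph.IsSubtree
  rw [(doubleInduceIso G s S').connected_iff, Finset.image_nonempty]

lemma edgeprod_image {V R : Type*} [CommRing R] [DecidableEq V] (G : SimpleGraph V) (s : Set V)
    (g : Sym2 V → R) (S' : Finset s) :
    (∏ᶠ e ∈ {e : Sym2 V | e ∈ G.edgeSet ∧ ∀ x ∈ e, x ∈ S'.image Subtype.val}, g e)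
      = ∏ᶠ e ∈ {e : Sym2 s | e ∈ (G.induce s).edgeSet ∧ ∀ x ∈ e, x ∈ S'},
          g (Sym2.map Subtype.val e) := by
  rw [← finprod_mem_image (f := g) (g := Sym2.map (Subtype.val : s → V))
    ((Sym2.map.injective Subtype.val_injective).injOn)]
  apply finprod_mem_congr _ (fun _ _ => rfl)
  ext e
  simp only [Set.mem_setOf_eq, Set.mem_image]
  constructor
  · rintro ⟨he, hend⟩
    induction e with
    | _ a b =>
      have ha : a ∈ S'.image Subtype.val := hend a (Sym2.mem_mk_left a b)
      have hb : b ∈ S'.image Subtype.val := hend b (Sym2.mem_mk_right a b)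
      obtain ⟨a', ha', rfl⟩ := Finset.mem_image.mp ha
      obtain ⟨b', hb', rfl⟩ := Finset.mem_image.mp hb
      refine ⟨s(a', b'), ⟨he, ?_⟩, rfl⟩
      intro x hx
      rcases Sym2.mem_iff.mp hx with rfl | rfl
      exacts [ha', hb']
  · rintro ⟨e', ⟨he', hend'⟩, rfl⟩
    refine ⟨?_, ?_⟩
    · induction e' with
      | _ a b => exact he'
    · intro x hx
      induction e' with
      | _ a b =>
        rcases Sym2.mem_iff.mp (by simpa using hx) with rfl | rfl
        · exact Finset.mem_image.mpr ⟨a, hend' a (Sym2.mem_mk_left a b), rfl⟩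
        · exact Finset.mem_image.mpr ⟨b, hend' b (Sym2.mem_mk_right a b), rfl⟩

lemma subtreeWeight_image {V R : Type*} [CommRing R] [DecidableEq V] (G : SimpleGraph V)
    (s : Set V) (f : V → R) (g : Sym2 V → R) (h : s → R) (S' : Finset s)
    (hh : ∀ x ∈ S', h x = f x.1) :
    G.subtreeWeight f g (S'.image Subtype.val)
      = (G.induce s).subtreeWeight h (fun e => g (e.map Subtype.val)) S' := by
  unfold SimpleGraph.subtreeWeight
  rw [Finset.prod_image (fun x _ y _ hxy => Subtype.val_injective hxy), edgeprod_image]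
  congr 1
  exact Finset.prod_congr rfl (fun x hx => (hh x hx).symm)

lemma subtreeWeight_insert_pendant {V R : Type*} [CommRing R] [Fintype V] [DecidableEq V]
    {G : SimpleGraph V} {u v : V} (hadj : G.Adj u v)
    (huniq : ∀ x, G.Adj u x → x = v) (f : V → R) (g : Sym2 V → R)
    {S : Finset V} (hu : u ∉ S) (hv : v ∈ S) :
    G.subtreeWeight f g (insert u S) = f u * g s(u, v) * G.subtreeWeight f g S := by
  unfold SimpleGraph.subtreeWeight
  rw [Finset.prod_insert hu]
  have hset : {e : Sym2 V | e ∈ G.edgeSet ∧ ∀ x ∈ e, x ∈ insert u S}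
      = insert s(u, v) {e : Sym2 V | e ∈ G.edgeSet ∧ ∀ x ∈ e, x ∈ S} := by
    ext e
    simp only [Set.mem_setOf_eq, Set.mem_insert_iff]
    constructor
    · rintro ⟨he, hend⟩
      induction e with
      | _ a b =>
        have hAdj : G.Adj a b := he
        by_cases hau : a = u
        · subst hau
          have : b = v := huniq b hAdj
          subst this; exact Or.inl rfl
        · by_cases hbu : b = u
          · subst hbu
            have : a = v := huniq a hAdj.symm
            subst this; exact Or.inl (Sym2.eq_swap)
          · refine Or.inr ⟨he, fun x hx => ?_⟩
            rcases Sym2.mem_iff.mp hx with rfl | rfl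
            · exact (Finset.mem_insert.mp (hend x (Sym2.mem_mk_left _ _))).resolve_left hau
            · exact (Finset.mem_insert.mp (hend x (Sym2.mem_mk_right _ _))).resolve_left hbu
    · rintro (rfl | ⟨he, hend⟩)
      · refine ⟨G.mem_edgeSet.mpr hadj, fun x hx => ?_⟩
        rcases Sym2.mem_iff.mp hx with rfl | rfl
        exacts [Finset.mem_insert_self _ _, Finset.mem_insert_of_mem hv]
      · exact ⟨he, fun x hx => Finset.mem_insert_of_mem (hend x hx)⟩
  rw [hset, finprod_mem_insert _ (by
      simp only [Set.mem_setOf_eq, not_and]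
      intro _
      exact fun h => hu (h u (Sym2.mem_mk_left u v))) (Set.toFinite _)]
  ring

/-- Pendant contraction for the subtree generating function rooted at two vertices.
With `T'` the weighted tree obtained from `T` by deleting the pendant vertex `u`
(with pendant edge `(u,v)`) and reweighting `v` by `f' v = f v * (f u * g s(u,v) + 1)`,
we have `F(T; f, g; w₁, w₂) = F(T'; f', g'; w₁, w₂)` for all distinct vertices
`w₁, w₂` different from `u`. -/
theorem subtreeSumAt2_pendant_contraction {V R : Type*} [Fintype V] [DecidableEq V]
    [CommRing R] (G : SimpleGraph V) [DecidableRel G.Adj]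
    (hG : G.IsTree) (hn : 1 < Fintype.card V)
    (u v : V) (hdeg : G.degree u = 1) (hadj : G.Adj u v) (hvu : v ≠ u)
    (f : V → R) (g : Sym2 V → R)
    (f' : {w : V // w ≠ u} → R)
    (hf'v : f' ⟨v, hvu⟩ = f v * (f u * g s(u, v) + 1))
    (hf'other : ∀ w : {w : V // w ≠ u}, (w : V) ≠ v → f' w = f (w : V))
    (w₁ w₂ : V) (hw : w₁ ≠ w₂) (hw₁ : w₁ ≠ u) (hw₂ : w₂ ≠ u) :
    G.subtreeSumAt2 f g w₁ w₂ =
      (G.induce {w : V | w ≠ u}).subtreeSumAt2 f' (fun e => g (e.map Subtype.val))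
        ⟨w₁, hw₁⟩ ⟨w₂, hw₂⟩ := by
  classical
  set U : Set V := {w : V | w ≠ u} with hU
  -- the unique neighbor of u is v
  have huniq : ∀ x, G.Adj u x → x = v := by
    intro x hx
    have hnb : G.neighborFinset u = {v} := by
      refine (Finset.eq_of_subset_of_card_le ?_ ?_).symm
      · intro y hy
        rw [Finset.mem_singleton] at hy
        rw [hy]
        exact (G.mem_neighborFinset u v).mpr hadj
      · rw [G.card_neighborFinset_eq_degree, hdeg, Finset.card_singleton]
    have : x ∈ G.neighborFinset u := (G.mem_neighborFinset u x).mpr hx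
    rw [hnb, Finset.mem_singleton] at this
    exact this
  have hw₁U : w₁ ∈ U := hw₁
  have hw₂U : w₂ ∈ U := hw₂
  have hvU : v ∈ U := hvu
  -- helper equalities
  have himg_subtype : ∀ (S : Finset V), u ∉ S →
      ((S.subtype (· ∈ U)).image Subtype.val) = S := by
    intro S hS
    have hmem : ∀ x ∈ S, x ∈ U := by
      intro x hx
      rintro rfl
      exact hS hx
    conv_rhs => rw [← Finset.subtype_map_of_mem hmem]
    rw [Finset.map_eq_image]
    rfl
  have hsubtype_img : ∀ (S' : Finset U), ((S'.image Subtype.val).subtype (· ∈ U)) = S' := by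
    intro S'
    ext x
    simp only [Finset.mem_subtype, Finset.mem_image]
    constructor
    · rintro ⟨a, ha, h⟩
      exact (Subtype.ext h : a = x) ▸ ha
    · intro h
      exact ⟨x, h, rfl⟩
  have hu_not_img : ∀ (S' : Finset U), u ∉ S'.image Subtype.val := by
    intro S' h
    obtain ⟨a, _, h2⟩ := Finset.mem_image.mp h
    exact a.2 h2
  -- rewrite both sums as finite sums
  unfold SimpleGraph.subtreeSumAt2
  have hA : {S : Finset V | G.IsSubtree S ∧ w₁ ∈ S ∧ w₂ ∈ S}
      = ↑(Finset.univ.filter (fun S : Finset V => G.IsSubtree S ∧ w₁ ∈ S ∧ w₂ ∈ S)) := by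
    ext S; simp [Finset.mem_filter]
  have hB : {S' : Finset U | (G.induce U).IsSubtree S' ∧ (⟨w₁, hw₁U⟩ : U) ∈ S'
        ∧ (⟨w₂, hw₂U⟩ : U) ∈ S'}
      = ↑(Finset.univ.filter (fun S' : Finset U => (G.induce U).IsSubtree S'
          ∧ (⟨w₁, hw₁U⟩ : U) ∈ S' ∧ (⟨w₂, hw₂U⟩ : U) ∈ S')) := by
    ext S'; simp [Finset.mem_filter]
  rw [hA, hB, finsum_mem_coe_finset, finsum_mem_coe_finset]
  set A := Finset.univ.filter (fun S : Finset V => G.IsSubtree S ∧ w₁ ∈ S ∧ w₂ ∈ S) with hAdef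
  set B := Finset.univ.filter (fun S' : Finset U => (G.induce U).IsSubtree S'
      ∧ (⟨w₁, hw₁U⟩ : U) ∈ S' ∧ (⟨w₂, hw₂U⟩ : U) ∈ S') with hBdef
  -- per-term identity on the RHS
  have hterm : ∀ S' ∈ B, (G.induce U).subtreeWeight f' (fun e => g (e.map Subtype.val)) S'
      = G.subtreeWeight f g (S'.image Subtype.val)
        + (if (⟨v, hvU⟩ : U) ∈ S' then
            f u * g s(u, v) * G.subtreeWeight f g (S'.image Subtype.val) else 0) := by
    intro S' _
    by_cases hv' : (⟨v, hvU⟩ : U) ∈ S'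
    · rw [if_pos hv',
        subtreeWeight_image G U f g (fun x => f x.1) S' (fun _ _ => rfl)]
      have hprod : (∏ x ∈ S', f' x) = (f u * g s(u, v) + 1) * ∏ x ∈ S', f x.1 := by
        rw [← Finset.mul_prod_erase S' f' hv',
          ← Finset.mul_prod_erase S' (fun x => f x.1) hv']
        have herase : ∏ x ∈ S'.erase ⟨v, hvU⟩, f' x
            = ∏ x ∈ S'.erase ⟨v, hvU⟩, f x.1 := by
          refine Finset.prod_congr rfl (fun x hx => hf'other x ?_)
          intro h
          exact (Finset.ne_of_mem_erase hx) (Subtype.ext h)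
        rw [herase, hf'v]
        ring
      unfold SimpleGraph.subtreeWeight
      rw [hprod]
      ring
    · rw [if_neg hv', add_zero]
      refine (subtreeWeight_image G U f g f' S' (fun x hx => hf'other x ?_)).symm
      intro h
      exact hv' ((Subtype.ext h : x = ⟨v, hvU⟩) ▸ hx)
  rw [Finset.sum_congr rfl hterm, Finset.sum_add_distrib, ← Finset.sum_filter,
    ← Finset.sum_filter_add_sum_filter_not A (fun S => u ∈ S), add_comm]
  congr 1
  -- subtrees avoiding u
  · refine Finset.sum_nbij' (fun S => S.subtype (· ∈ U)) (fun S' => S'.image Subtype.val)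
      ?_ ?_ ?_ ?_ ?_
    · intro S hS
      rw [Finset.mem_filter] at hS
      obtain ⟨hSA, hSu⟩ := hS
      rw [hAdef, Finset.mem_filter] at hSA
      obtain ⟨-, hsub, h1, h2⟩ := hSA
      rw [hBdef, Finset.mem_filter]
      refine ⟨Finset.mem_univ _, ?_, ?_, ?_⟩
      · rw [isSubtree_image_val, himg_subtype S hSu]
        exact hsub
      · exact Finset.mem_subtype.mpr h1
      · exact Finset.mem_subtype.mpr h2
    · intro S' hS'
      rw [hBdef, Finset.mem_filter] at hS'
      obtain ⟨-, hsub, h1, h2⟩ := hS'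
      rw [Finset.mem_filter, hAdef, Finset.mem_filter]
      refine ⟨⟨Finset.mem_univ _, (isSubtree_image_val S').mp hsub,
        Finset.mem_image.mpr ⟨_, h1, rfl⟩, Finset.mem_image.mpr ⟨_, h2, rfl⟩⟩,
        hu_not_img S'⟩
    · intro S hS
      rw [Finset.mem_filter] at hS
      exact himg_subtype S hS.2
    · intro S' _
      exact hsubtype_img S'
    · intro S hS
      rw [Finset.mem_filter] at hS
      rw [himg_subtype S hS.2]
  -- subtrees containing u
  · refine Finset.sum_nbij' (fun S => (S.erase u).subtype (· ∈ U))
      (fun S' => insert u (S'.image Subtype.val)) ?_ ?_ ?_ ?_ ?_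
    · intro S hS
      rw [Finset.mem_filter] at hS
      obtain ⟨hSA, hSu⟩ := hS
      rw [hAdef, Finset.mem_filter] at hSA
      obtain ⟨-, hsub, h1, h2⟩ := hSA
      obtain ⟨hvS, hsub'⟩ := pendant_erase huniq hsub hSu h1 hw₁
      rw [Finset.mem_filter, hBdef, Finset.mem_filter]
      have himg : ((S.erase u).subtype (· ∈ U)).image Subtype.val = S.erase u :=
        himg_subtype _ (Finset.notMem_erase u S)
      refine ⟨⟨Finset.mem_univ _, ?_, ?_, ?_⟩, ?_⟩
      · rw [isSubtree_image_val, himg]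
        exact hsub'
      · exact Finset.mem_subtype.mpr (Finset.mem_erase.mpr ⟨hw₁, h1⟩)
      · exact Finset.mem_subtype.mpr (Finset.mem_erase.mpr ⟨hw₂, h2⟩)
      · exact Finset.mem_subtype.mpr (Finset.mem_erase.mpr ⟨hvu, hvS⟩)
    · intro S' hS'
      rw [Finset.mem_filter, hBdef, Finset.mem_filter] at hS'
      obtain ⟨⟨-, hsub, h1, h2⟩, hv'⟩ := hS'
      have hvimg : v ∈ S'.image Subtype.val := Finset.mem_image.mpr ⟨_, hv', rfl⟩
      rw [Finset.mem_filter, hAdef, Finset.mem_filter]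
      refine ⟨⟨Finset.mem_univ _,
        isSubtree_insert_pendant hadj ((isSubtree_image_val S').mp hsub) hvimg,
        Finset.mem_insert_of_mem (Finset.mem_image.mpr ⟨_, h1, rfl⟩),
        Finset.mem_insert_of_mem (Finset.mem_image.mpr ⟨_, h2, rfl⟩)⟩,
        Finset.mem_insert_self _ _⟩
    · intro S hS
      rw [Finset.mem_filter] at hS
      show insert u (((S.erase u).subtype (· ∈ U)).image Subtype.val) = S
      rw [himg_subtype _ (Finset.notMem_erase u S), Finset.insert_erase hS.2]
    · intro S' hS'
      show ((insert u (S'.image Subtype.val)).erase u).subtype (· ∈ U) = S'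
      rw [Finset.erase_insert (hu_not_img S'), hsubtype_img S']
    · intro S hS
      rw [Finset.mem_filter] at hS
      obtain ⟨hSA, hSu⟩ := hS
      rw [hAdef, Finset.mem_filter] at hSA
      obtain ⟨-, hsub, h1, h2⟩ := hSA
      obtain ⟨hvS, _⟩ := pendant_erase huniq hsub hSu h1 hw₁
      rw [himg_subtype _ (Finset.notMem_erase u S)]
      conv_lhs => rw [← Finset.insert_erase hSu]
      exact subtreeWeight_insert_pendant hadj huniq f g (Finset.notMem_erase u S)
        (Finset.mem_erase.mpr ⟨hvu, hvS⟩)
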